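/- For every integer k ≥ 1, every ℓ ∈ ℤ^r, and all arrays m, n ∈ ℤ_{≥0}^{r×k}, the quadratic form satisfies Q(m,n) = (1/(2δ))·Σ_{j=1}^{k} ( (q_{j−1} − q_j)ᵀ λ (q_{j−1} − q_j) − N_jᵀ λ N_j ), where q_j := (q_{α,j})_{α} ∈ ℤ^r (with q_{α,k+1} := q_{α,k}) and N_j := (Σ_{i=j}^{k} n_{α,i})_{α} ∈ ℤ^r. -/

import Mathlib

/-!
# Statement 3: the quadratic form identity in the simply-laced case

`Q(m,n) = (1/(2δ)) Σ_{j=1}^{k} ((q_{j−1} − q_j)ᵀ λ (q_{j−1} − q_j) − N_jᵀ λ N_j)` in ℚ,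
where `δ = det C`, `λ = δ C⁻¹` is the adjugate of `C`, and
`N_j = (Σ_{i=j}^{k} n_{α,i})_α`.
-/

open scoped BigOperators

noncomputable section

/-- `p_{α,j} = Σ_{i=1}^k min(i,j) (n_{α,i} − Σ_β C_{αβ} m_{β,i})`
(the indices `i` of `n`, `m` are 1-based via `Fin k`); with this convention `p_{α,0} = 0`. -/
def pSL (r k : ℕ) (C : Matrix (Fin r) (Fin r) ℤ) (n m : Fin r → Fin k → ℕ)
    (α : Fin r) (j : ℕ) : ℤ :=
  ∑ i : Fin k, (min ((i : ℕ) + 1) j : ℤ) *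
    ((n α i : ℤ) - ∑ β : Fin r, C α β * (m β i : ℤ))

/-- `q_{α,j} = q_{α,0} + p_{α,j}` where `q_{α,0} = ℓ_α − p_{α,k}`; this is valid for all
`j ∈ ℤ_{≥0}` and automatically satisfies `q_{α,j} = q_{α,k}` for `j ≥ k`. -/
def qSL (r k : ℕ) (C : Matrix (Fin r) (Fin r) ℤ) (ℓ : Fin r → ℤ)
    (n m : Fin r → Fin k → ℕ) (j : ℕ) (α : Fin r) : ℤ :=
  ℓ α - pSL r k C n m α k + pSL r k C n m α j

/-- `N_j = (Σ_{i=j}^{k} n_{α,i})_α ∈ ℤ^r`. -/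
def NSL (r k : ℕ) (n : Fin r → Fin k → ℕ) (j : ℕ) (α : Fin r) : ℤ :=
  ∑ i ∈ Finset.univ.filter (fun i : Fin k => j ≤ (i : ℕ) + 1), (n α i : ℤ)

/-- The bilinear form `x ᵀ λ y` with `λ = adjugate C = (det C) C⁻¹`, as a rational number. -/
def lamForm (r : ℕ) (C : Matrix (Fin r) (Fin r) ℤ) (x y : Fin r → ℤ) : ℚ :=
  ∑ α : Fin r, ∑ β : Fin r, (x α : ℚ) * (C.adjugate α β : ℚ) * (y β : ℚ)

/-- auxiliary: partial sums of `m` from index `j` on. -/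
def MvZ (r k : ℕ) (m : Fin r → Fin k → ℕ) (j : ℕ) (α : Fin r) : ℤ :=
  ∑ i ∈ Finset.univ.filter (fun i : Fin k => j ≤ (i : ℕ) + 1), (m α i : ℤ)

lemma sum_if_le' (k c : ℕ) (hc : c ≤ k) :
    ∑ j ∈ Finset.Icc 1 k, (if j ≤ c then (1:ℚ) else 0) = c := by
  rw [Finset.sum_boole]
  have h : (Finset.Icc 1 k).filter (fun j => j ≤ c) = Finset.Icc 1 c := by
    ext j; simp only [Finset.mem_filter, Finset.mem_Icc]; omega
  rw [h, Nat.card_Icc]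
  norm_num

lemma cnt' (k a b : ℕ) (ha : a + 1 ≤ k) (hb : b + 1 ≤ k) :
    ∑ j ∈ Finset.Icc 1 k, (if j ≤ a + 1 then (1:ℚ) else 0) * (if j ≤ b + 1 then (1:ℚ) else 0)
      = ((min (a+1) (b+1) : ℕ) : ℚ) := by
  rw [← sum_if_le' k (min (a+1) (b+1)) (by omega)]
  refine Finset.sum_congr rfl fun j _ => ?_
  by_cases h1 : j ≤ a + 1 <;> by_cases h2 : j ≤ b + 1 <;>
    simp [h1, h2, le_min_iff] <;> omega

lemma swapj {ι : Type*} [Fintype ι] (k : ℕ) (u v : ι → Fin k → ℚ) :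
    ∑ j ∈ Finset.Icc 1 k, ∑ x : ι,
      (∑ i ∈ Finset.univ.filter (fun i : Fin k => j ≤ (i:ℕ)+1), u x i) *
      (∑ i ∈ Finset.univ.filter (fun i : Fin k => j ≤ (i:ℕ)+1), v x i)
    = ∑ x : ι, ∑ i : Fin k, ∑ i' : Fin k,
        u x i * v x i' * ((min ((i:ℕ)+1) ((i':ℕ)+1) : ℕ) : ℚ) := by
  have step : ∀ j, ∀ x : ι,
      (∑ i ∈ Finset.univ.filter (fun i : Fin k => j ≤ (i:ℕ)+1), u x i) *
      (∑ i ∈ Finset.univ.filter (fun i : Fin k => j ≤ (i:ℕ)+1), v x i)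
      = ∑ i : Fin k, ∑ i' : Fin k, u x i * v x i' *
          ((if j ≤ (i:ℕ)+1 then (1:ℚ) else 0) * (if j ≤ (i':ℕ)+1 then (1:ℚ) else 0)) := by
    intro j x
    rw [Finset.sum_filter, Finset.sum_filter, Finset.sum_mul_sum]
    refine Finset.sum_congr rfl fun i _ => Finset.sum_congr rfl fun i' _ => ?_
    split_ifs <;> ring
  rw [Finset.sum_congr rfl fun j _ => Finset.sum_congr rfl fun x _ => step j x]
  rw [Finset.sum_comm]
  refine Finset.sum_congr rfl fun x _ => ?_
  rw [Finset.sum_comm]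
  refine Finset.sum_congr rfl fun i _ => ?_
  rw [Finset.sum_comm]
  refine Finset.sum_congr rfl fun i' _ => ?_
  rw [← Finset.mul_sum, cnt' k i i' i.isLt i'.isLt]

lemma bilin_key {r : ℕ} (δ : ℚ) (A L : Fin r → Fin r → ℚ)
    (hAL : ∀ β γ, ∑ α, A α γ * L α β = if γ = β then δ else 0)
    (hLA : ∀ α γ, ∑ β, L α β * A β γ = if α = γ then δ else 0)
    (M N : Fin r → ℚ) :
    (∑ α, ∑ β, ((∑ γ, A α γ * M γ) - N α) * L α β * ((∑ γ, A β γ * M γ) - N β))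
      - ∑ α, ∑ β, N α * L α β * N β
    = δ * (∑ α, ∑ β, M α * A α β * M β) - 2 * δ * (∑ α, M α * N α) := by
  set CM : Fin r → ℚ := fun α => ∑ γ, A α γ * M γ with hCM
  have hT : ∀ β, ∑ α, CM α * L α β = δ * M β := by
    intro β
    have h1 : ∀ α, CM α * L α β = ∑ γ, A α γ * L α β * M γ := by
      intro α; rw [hCM]; rw [Finset.sum_mul]
      exact Finset.sum_congr rfl fun γ _ => by ring
    simp_rw [h1]
    rw [Finset.sum_comm]
    have h2 : ∀ γ, ∑ α, A α γ * L α β * M γ = (if γ = β then δ else 0) * M γ := by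
      intro γ; rw [← Finset.sum_mul, hAL]
    simp_rw [h2, ite_mul, zero_mul]
    simp
  have hT2 : ∀ α, ∑ β, L α β * CM β = δ * M α := by
    intro α
    have h1 : ∀ β, L α β * CM β = ∑ γ, L α β * A β γ * M γ := by
      intro β; rw [hCM, Finset.mul_sum]
      exact Finset.sum_congr rfl fun γ _ => by ring
    simp_rw [h1]
    rw [Finset.sum_comm]
    have h2 : ∀ γ, ∑ β, L α β * A β γ * M γ = (if α = γ then δ else 0) * M γ := by
      intro γ; rw [← Finset.sum_mul, hLA]
    simp_rw [h2, ite_mul, zero_mul]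
    simp
  have expand : ∀ α, ∑ β, (CM α - N α) * L α β * (CM β - N β)
      = (CM α - N α) * (δ * M α) - (CM α - N α) * (∑ β, L α β * N β) := by
    intro α
    have h1 : ∀ β, (CM α - N α) * L α β * (CM β - N β)
        = (CM α - N α) * (L α β * CM β) - (CM α - N α) * (L α β * N β) := fun β => by ring
    simp_rw [h1]
    rw [Finset.sum_sub_distrib, ← Finset.mul_sum, ← Finset.mul_sum, hT2]
  simp only [hCM] at expand
  simp_rw [expand]
  rw [Finset.sum_sub_distrib]
  have e1 : ∑ α, (CM α - N α) * (δ * M α)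
      = δ * (∑ α, ∑ β, M α * A α β * M β) - δ * ∑ α, M α * N α := by
    have h1 : ∀ α, (CM α - N α) * (δ * M α) = δ * (M α * CM α) - δ * (M α * N α) := by
      intro α; ring
    simp_rw [h1]
    rw [Finset.sum_sub_distrib, ← Finset.mul_sum, ← Finset.mul_sum]
    congr 2
    refine Finset.sum_congr rfl fun α _ => ?_
    rw [hCM, Finset.mul_sum]
    exact Finset.sum_congr rfl fun β _ => by ring
  have e2 : ∑ α, (CM α - N α) * (∑ β, L α β * N β)
      = δ * (∑ α, M α * N α) - ∑ α, ∑ β, N α * L α β * N β := by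
    have h1 : ∀ α, (CM α - N α) * (∑ β, L α β * N β)
        = (∑ β, CM α * L α β * N β) - ∑ β, N α * L α β * N β := by
      intro α
      rw [sub_mul, Finset.mul_sum, Finset.mul_sum]
      congr 1 <;> exact Finset.sum_congr rfl fun β _ => by ring
    simp_rw [h1]
    rw [Finset.sum_sub_distrib]
    congr 1
    rw [Finset.sum_comm]
    have h2 : ∀ β, ∑ α, CM α * L α β * N β = δ * (M β * N β) := by
      intro β; rw [← Finset.sum_mul, hT]; ring
    simp_rw [h2]
    rw [← Finset.mul_sum]
  rw [e1, e2]
  ring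

lemma claimA (r k : ℕ) (C : Matrix (Fin r) (Fin r) ℤ) (ℓ : Fin r → ℤ)
    (n m : Fin r → Fin k → ℕ) (j : ℕ) (hj : j ∈ Finset.Icc 1 k) (α : Fin r) :
    qSL r k C ℓ n m (j - 1) α - qSL r k C ℓ n m j α
      = (∑ β, C α β * MvZ r k m j β) - NSL r k n j α := by
  simp only [Finset.mem_Icc] at hj
  have e0 : qSL r k C ℓ n m (j-1) α - qSL r k C ℓ n m j α
      = pSL r k C n m α (j-1) - pSL r k C n m α j := by
    simp [qSL]
  rw [e0, pSL, pSL, ← Finset.sum_sub_distrib]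
  have e1 : ∀ i : Fin k,
      min ((i : ℕ) + 1 : ℤ) (((j-1 : ℕ)) : ℤ) * ((n α i : ℤ) - ∑ β : Fin r, C α β * (m β i : ℤ))
        - min ((i : ℕ) + 1 : ℤ) ((j : ℕ) : ℤ) * ((n α i : ℤ) - ∑ β : Fin r, C α β * (m β i : ℤ))
      = if j ≤ (i : ℕ) + 1 then (∑ β : Fin r, C α β * (m β i : ℤ)) - (n α i : ℤ) else 0 := by
    intro i
    split_ifs with h
    · have a1 : min ((i : ℕ) + 1 : ℤ) (((j-1 : ℕ)) : ℤ) = (j : ℤ) - 1 := by omega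
      have a2 : min ((i : ℕ) + 1 : ℤ) ((j : ℕ) : ℤ) = (j : ℤ) := by omega
      rw [a1, a2]; ring
    · have a1 : min ((i : ℕ) + 1 : ℤ) (((j-1 : ℕ)) : ℤ) = ((i : ℕ) : ℤ) + 1 := by omega
      have a2 : min ((i : ℕ) + 1 : ℤ) ((j : ℕ) : ℤ) = ((i : ℕ) : ℤ) + 1 := by omega
      rw [a1, a2]; ring
  rw [Finset.sum_congr rfl (fun i _ => e1 i)]
  rw [Finset.sum_ite, Finset.sum_const_zero, add_zero, Finset.sum_sub_distrib]
  rw [NSL]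
  congr 1
  rw [Finset.sum_comm]
  simp only [MvZ, Finset.mul_sum]

/-- **The quadratic form identity (simply-laced case).** Let `C` be the Cartan matrix of a
simply-laced simple Lie algebra of rank `r`, `δ = det C`, `λ = δ C⁻¹ = adjugate C`. Then for
every `k ≥ 1`, `ℓ ∈ ℤ^r` and all `m, n ∈ ℤ_{≥0}^{r×k}`,
`Q(m,n) = (1/(2δ)) Σ_{j=1}^{k} ((q_{j−1} − q_j)ᵀ λ (q_{j−1} − q_j) − N_jᵀ λ N_j)`
holds in ℚ, where
`Q(m,n) = ½ Σ_{α,β,i,j} m_{α,i} C_{αβ} min(i,j) m_{β,j} − Σ_{α,i,j} m_{α,i} min(i,j) n_{α,j}`. -/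
theorem QSL_eq (r k : ℕ) (hr : 1 ≤ r) (hk : 1 ≤ k)
    (C : Matrix (Fin r) (Fin r) ℤ)
    (hsym : C.IsSymm)
    (hdiag : ∀ α, C α α = 2)
    (hoff : ∀ α β, α ≠ β → C α β = 0 ∨ C α β = -1)
    (hpos : ∀ v : Fin r → ℤ, v ≠ 0 → 0 < ∑ α, ∑ β, v α * C α β * v β)
    (hconn : ∀ α β : Fin r, Relation.ReflTransGen (fun a b => C a b = -1) α β)
    (ℓ : Fin r → ℤ) (n m : Fin r → Fin k → ℕ) :
    ((1 : ℚ) / 2) * ∑ α : Fin r, ∑ β : Fin r, ∑ i : Fin k, ∑ j : Fin k,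
        ((m α i : ℤ) : ℚ) * (C α β : ℚ) * ((min ((i : ℕ) + 1) ((j : ℕ) + 1) : ℕ) : ℚ) *
          ((m β j : ℤ) : ℚ)
      - ∑ α : Fin r, ∑ i : Fin k, ∑ j : Fin k,
        ((m α i : ℤ) : ℚ) * ((min ((i : ℕ) + 1) ((j : ℕ) + 1) : ℕ) : ℚ) * ((n α j : ℤ) : ℚ) =
    (1 / (2 * (C.det : ℚ))) * ∑ j ∈ Finset.Icc 1 k,
      (lamForm r C (fun α => qSL r k C ℓ n m (j - 1) α - qSL r k C ℓ n m j α)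
          (fun α => qSL r k C ℓ n m (j - 1) α - qSL r k C ℓ n m j α)
        - lamForm r C (NSL r k n j) (NSL r k n j)) := by
  classical
  have hdetZ : C.det ≠ 0 := by
    intro h
    obtain ⟨v, hv, hmv⟩ := Matrix.exists_mulVec_eq_zero_iff.mpr h
    have h1 := hpos v hv
    have h2 : ∑ α, ∑ β, v α * C α β * v β = 0 := by
      have e : ∀ α, ∑ β, v α * C α β * v β = v α * C.mulVec v α := by
        intro α
        rw [Matrix.mulVec, dotProduct, Finset.mul_sum]
        exact Finset.sum_congr rfl fun β _ => by ring
      simp_rw [e, hmv]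
      simp
    omega
  have hdet : (C.det : ℚ) ≠ 0 := Int.cast_ne_zero.mpr hdetZ
  have hCs : ∀ α β, C β α = C α β := by
    intro α β
    have := congrFun (congrFun hsym α) β
    rwa [Matrix.transpose_apply] at this
  -- the two key adjugate identities over ℚ
  have hAL : ∀ β γ : Fin r, ∑ α, ((C α γ : ℤ) : ℚ) * ((C.adjugate α β : ℤ) : ℚ)
      = if γ = β then (C.det : ℚ) else 0 := by
    intro β γ
    have h := congrFun (congrFun (Matrix.mul_adjugate C) γ) β
    rw [Matrix.mul_apply] at h
    simp only [Matrix.smul_apply, Matrix.one_apply, smul_eq_mul] at h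
    have e : ∑ α, ((C α γ : ℤ) : ℚ) * ((C.adjugate α β : ℤ) : ℚ)
        = ((∑ α, C γ α * C.adjugate α β : ℤ) : ℚ) := by
      push_cast
      exact Finset.sum_congr rfl fun α _ => by rw [hCs α γ]
    rw [e, h]
    split_ifs <;> simp
  have hLA : ∀ α γ : Fin r, ∑ β, ((C.adjugate α β : ℤ) : ℚ) * ((C β γ : ℤ) : ℚ)
      = if α = γ then (C.det : ℚ) else 0 := by
    intro α γ
    have h := congrFun (congrFun (Matrix.adjugate_mul C) α) γ
    rw [Matrix.mul_apply] at h
    simp only [Matrix.smul_apply, Matrix.one_apply, smul_eq_mul] at h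
    have e : ∑ β, ((C.adjugate α β : ℤ) : ℚ) * ((C β γ : ℤ) : ℚ)
        = ((∑ β, C.adjugate α β * C β γ : ℤ) : ℚ) := by
      push_cast; rfl
    rw [e, h]
    split_ifs <;> simp
  -- per-j reduction of the summand
  have hRHSj : ∀ j ∈ Finset.Icc 1 k,
      lamForm r C (fun α => qSL r k C ℓ n m (j - 1) α - qSL r k C ℓ n m j α)
          (fun α => qSL r k C ℓ n m (j - 1) α - qSL r k C ℓ n m j α)
        - lamForm r C (NSL r k n j) (NSL r k n j)
      = (C.det : ℚ) * (∑ α, ∑ β, ((MvZ r k m j α : ℤ) : ℚ) * ((C α β : ℤ) : ℚ)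
            * ((MvZ r k m j β : ℤ) : ℚ))
        - 2 * (C.det : ℚ) * (∑ α, ((MvZ r k m j α : ℤ) : ℚ) * ((NSL r k n j α : ℤ) : ℚ)) := by
    intro j hj
    have key := bilin_key (r := r) (C.det : ℚ) (fun α β => ((C α β : ℤ) : ℚ))
      (fun α β => ((C.adjugate α β : ℤ) : ℚ)) hAL hLA
      (fun α => ((MvZ r k m j α : ℤ) : ℚ)) (fun α => ((NSL r k n j α : ℤ) : ℚ))
    have eD : lamForm r C (fun α => qSL r k C ℓ n m (j - 1) α - qSL r k C ℓ n m j α)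
        (fun α => qSL r k C ℓ n m (j - 1) α - qSL r k C ℓ n m j α)
        = ∑ α, ∑ β, ((∑ γ, ((C α γ : ℤ) : ℚ) * ((MvZ r k m j γ : ℤ) : ℚ))
              - ((NSL r k n j α : ℤ) : ℚ)) * ((C.adjugate α β : ℤ) : ℚ)
            * ((∑ γ, ((C β γ : ℤ) : ℚ) * ((MvZ r k m j γ : ℤ) : ℚ))
              - ((NSL r k n j β : ℤ) : ℚ)) := by
      rw [lamForm]
      refine Finset.sum_congr rfl fun α _ => Finset.sum_congr rfl fun β _ => ?_
      rw [claimA r k C ℓ n m j hj α, claimA r k C ℓ n m j hj β]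
      push_cast
      ring
    have eN : lamForm r C (NSL r k n j) (NSL r k n j)
        = ∑ α, ∑ β, ((NSL r k n j α : ℤ) : ℚ) * ((C.adjugate α β : ℤ) : ℚ)
            * ((NSL r k n j β : ℤ) : ℚ) := rfl
    rw [eD, eN]
    exact key
  rw [Finset.sum_congr rfl hRHSj]
  have hpull : (1 / (2 * (C.det : ℚ))) * ∑ j ∈ Finset.Icc 1 k,
      ((C.det : ℚ) * (∑ α, ∑ β, ((MvZ r k m j α : ℤ) : ℚ) * ((C α β : ℤ) : ℚ)
            * ((MvZ r k m j β : ℤ) : ℚ))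
        - 2 * (C.det : ℚ) * (∑ α, ((MvZ r k m j α : ℤ) : ℚ) * ((NSL r k n j α : ℤ) : ℚ)))
      = ((1 : ℚ)/2) * (∑ j ∈ Finset.Icc 1 k, ∑ α, ∑ β, ((MvZ r k m j α : ℤ) : ℚ)
            * ((C α β : ℤ) : ℚ) * ((MvZ r k m j β : ℤ) : ℚ))
        - ∑ j ∈ Finset.Icc 1 k, ∑ α, ((MvZ r k m j α : ℤ) : ℚ) * ((NSL r k n j α : ℤ) : ℚ) := by
    rw [Finset.mul_sum, Finset.mul_sum, ← Finset.sum_sub_distrib]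
    refine Finset.sum_congr rfl fun j _ => ?_
    field_simp
  rw [hpull]
  -- now identify the two j-sums with the LHS double sums
  have hM : ∑ j ∈ Finset.Icc 1 k, ∑ α, ∑ β, ((MvZ r k m j α : ℤ) : ℚ)
        * ((C α β : ℤ) : ℚ) * ((MvZ r k m j β : ℤ) : ℚ)
      = ∑ α : Fin r, ∑ β : Fin r, ∑ i : Fin k, ∑ j : Fin k,
          ((m α i : ℤ) : ℚ) * (C α β : ℚ) * ((min ((i : ℕ) + 1) ((j : ℕ) + 1) : ℕ) : ℚ) *
            ((m β j : ℤ) : ℚ) := by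
    have e1 : ∀ j, (∑ α, ∑ β, ((MvZ r k m j α : ℤ) : ℚ)
          * ((C α β : ℤ) : ℚ) * ((MvZ r k m j β : ℤ) : ℚ))
        = ∑ p : Fin r × Fin r,
            (∑ i ∈ Finset.univ.filter (fun i : Fin k => j ≤ (i:ℕ)+1),
              ((m p.1 i : ℚ) * ((C p.1 p.2 : ℤ) : ℚ))) *
            (∑ i ∈ Finset.univ.filter (fun i : Fin k => j ≤ (i:ℕ)+1), ((m p.2 i : ℕ) : ℚ)) := by
      intro j
      rw [Fintype.sum_prod_type]
      refine Finset.sum_congr rfl fun α _ => Finset.sum_congr rfl fun β _ => ?_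
      have c1 : ((MvZ r k m j α : ℤ) : ℚ)
          = ∑ i ∈ Finset.univ.filter (fun i : Fin k => j ≤ (i:ℕ)+1), ((m α i : ℕ) : ℚ) := by
        rw [MvZ]; push_cast; rfl
      have c2 : ((MvZ r k m j β : ℤ) : ℚ)
          = ∑ i ∈ Finset.univ.filter (fun i : Fin k => j ≤ (i:ℕ)+1), ((m β i : ℕ) : ℚ) := by
        rw [MvZ]; push_cast; rfl
      rw [c1, c2, Finset.sum_mul]
    rw [Finset.sum_congr rfl fun j _ => e1 j]
    rw [swapj k (fun (p : Fin r × Fin r) (i : Fin k) => ((m p.1 i : ℚ) * ((C p.1 p.2 : ℤ) : ℚ)))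
        (fun (p : Fin r × Fin r) (i : Fin k) => ((m p.2 i : ℕ) : ℚ))]
    rw [Fintype.sum_prod_type]
    refine Finset.sum_congr rfl fun α _ => Finset.sum_congr rfl fun β _ =>
      Finset.sum_congr rfl fun i _ => Finset.sum_congr rfl fun i' _ => ?_
    push_cast
    ring
  have hN : ∑ j ∈ Finset.Icc 1 k, ∑ α, ((MvZ r k m j α : ℤ) : ℚ) * ((NSL r k n j α : ℤ) : ℚ)
      = ∑ α : Fin r, ∑ i : Fin k, ∑ j : Fin k,
          ((m α i : ℤ) : ℚ) * ((min ((i : ℕ) + 1) ((j : ℕ) + 1) : ℕ) : ℚ) *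
            ((n α j : ℤ) : ℚ) := by
    have e1 : ∀ j, (∑ α, ((MvZ r k m j α : ℤ) : ℚ) * ((NSL r k n j α : ℤ) : ℚ))
        = ∑ α : Fin r,
            (∑ i ∈ Finset.univ.filter (fun i : Fin k => j ≤ (i:ℕ)+1), ((m α i : ℕ) : ℚ)) *
            (∑ i ∈ Finset.univ.filter (fun i : Fin k => j ≤ (i:ℕ)+1), ((n α i : ℕ) : ℚ)) := by
      intro j
      refine Finset.sum_congr rfl fun α _ => ?_
      have c1 : ((MvZ r k m j α : ℤ) : ℚ)
          = ∑ i ∈ Finset.univ.filter (fun i : Fin k => j ≤ (i:ℕ)+1), ((m α i : ℕ) : ℚ) := by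
        rw [MvZ]; push_cast; rfl
      have c2 : ((NSL r k n j α : ℤ) : ℚ)
          = ∑ i ∈ Finset.univ.filter (fun i : Fin k => j ≤ (i:ℕ)+1), ((n α i : ℕ) : ℚ) := by
        rw [NSL]; push_cast; rfl
      rw [c1, c2]
    rw [Finset.sum_congr rfl fun j _ => e1 j]
    rw [swapj k (fun (α : Fin r) (i : Fin k) => ((m α i : ℕ) : ℚ)) (fun (α : Fin r) (i : Fin k) => ((n α i : ℕ) : ℚ))]
    refine Finset.sum_congr rfl fun α _ =>
      Finset.sum_congr rfl fun i _ => Finset.sum_congr rfl fun i' _ => ?_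
    push_cast
    ring
  rw [hM, hN]


end
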